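/- arXiv:2008.05947 — 2 statements merged into one kernel-verified Lean document; each statement's English description precedes it below -/
import Mathlib

section
/- Let x₁,…,xₘ be points in a complex Hilbert space H and let a₁,…,aₘ be complex numbers with |aⱼ| ≤ 1 for 1 ≤ j ≤ m. Then there exist complex numbers b₁,…,bₘ with |bⱼ| = 1 for 1 ≤ j ≤ m satisfying ‖∑_{j=1}^m aⱼxⱼ − ∑_{j=1}^m bⱼxⱼ‖² ≤ 4·∑_{j=1}^m ‖xⱼ‖². -/
/-- For `|a| ≤ 1` we can find `w` with `|a + w| = |a - w| = 1` and `|w| ≤ 1`. -/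
lemma exists_unimodular_split (a : ℂ) (ha : ‖a‖ ≤ 1) :
    ∃ w : ℂ, ‖a + w‖ = 1 ∧ ‖a - w‖ = 1 ∧ ‖w‖ ≤ 1 := by
  set r := ‖a‖ with hr
  set s := Real.sqrt (1 - r ^ 2) with hs
  have hr0 : 0 ≤ r := norm_nonneg a
  have h1r : 0 ≤ 1 - r ^ 2 := by nlinarith
  have hs2 : s ^ 2 = 1 - r ^ 2 := Real.sq_sqrt h1r
  have hs0 : 0 ≤ s := Real.sqrt_nonneg _
  set u := Complex.exp (Complex.arg a * Complex.I) with hu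
  have hau : a = (r : ℂ) * u := (Complex.norm_mul_exp_arg_mul_I a).symm
  have huabs : ‖u‖ = 1 := Complex.norm_exp_ofReal_mul_I _
  refine ⟨(s : ℂ) * Complex.I * u, ?_, ?_, ?_⟩
  · have : a + (s : ℂ) * Complex.I * u = ((r : ℂ) + (s : ℂ) * Complex.I) * u := by
      rw [hau]; ring
    rw [this, norm_mul, huabs, mul_one, Complex.norm_add_mul_I]
    rw [show r ^ 2 + s ^ 2 = 1 by rw [hs2]; ring]
    exact Real.sqrt_one
  · have : a - (s : ℂ) * Complex.I * u = ((r : ℂ) + ((-s : ℝ) : ℂ) * Complex.I) * u := by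
      rw [hau]; push_cast; ring
    rw [this, norm_mul, huabs, mul_one, Complex.norm_add_mul_I]
    rw [show r ^ 2 + (-s) ^ 2 = 1 by rw [neg_sq, hs2]; ring]
    exact Real.sqrt_one
  · rw [norm_mul, norm_mul, huabs, Complex.norm_I, Complex.norm_real, Real.norm_eq_abs,
      abs_of_nonneg hs0, mul_one, mul_one]
    nlinarith

/-- **Lemma 3 (Hilbert space lemma).** Coefficients of modulus at most one in front of
vectors of a complex Hilbert space can be replaced by unimodular ones with controlled
error. -/
theorem statement6
    {H : Type*} [NormedAddCommGroup H] [InnerProductSpace ℂ H] [CompleteSpace H]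
    (m : ℕ) (x : Fin m → H) (a : Fin m → ℂ)
    (ha : ∀ j, ‖a j‖ ≤ 1) :
    ∃ b : Fin m → ℂ, (∀ j, ‖b j‖ = 1) ∧
      ‖(∑ j, a j • x j) - ∑ j, b j • x j‖ ^ 2 ≤ 4 * ∑ j, ‖x j‖ ^ 2 := by
  choose w hw1 hw2 hw3 using fun j => exists_unimodular_split (a j) (ha j)
  have main : ∀ s : Finset (Fin m), ∃ b : Fin m → ℂ, (∀ j, ‖b j‖ = 1) ∧
      ‖∑ j ∈ s, (a j - b j) • x j‖ ^ 2 ≤ ∑ j ∈ s, ‖x j‖ ^ 2 := by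
    intro s
    induction s using Finset.induction with
    | empty => exact ⟨fun j => a j + w j, hw1, by simp⟩
    | @insert i s hi ih =>
      obtain ⟨b, hb, hbound⟩ := ih
      set S := ∑ j ∈ s, (a j - b j) • x j with hS
      have par := parallelogram_law_with_norm ℂ S ((w i) • x i)
      have hwx : ‖(w i) • x i‖ ≤ ‖x i‖ := by
        rw [norm_smul]
        calc ‖w i‖ * ‖x i‖ ≤ 1 * ‖x i‖ :=
          mul_le_mul_of_nonneg_right (hw3 i) (norm_nonneg _)
        _ = ‖x i‖ := one_mul _
      have key : ∃ b' : Fin m → ℂ, (∀ j, ‖b' j‖ = 1) ∧ (∀ j ∈ s, b' j = b j) ∧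
          ‖S + (a i - b' i) • x i‖ ^ 2 ≤ ‖S‖ ^ 2 + ‖x i‖ ^ 2 := by
        rcases le_total (‖S + (w i) • x i‖) (‖S - (w i) • x i‖) with h | h
        · refine ⟨Function.update b i (a i - w i), ?_, ?_, ?_⟩
          · intro j
            rcases eq_or_ne j i with rfl | hj
            · simpa using hw2 j
            · simp [Function.update_of_ne hj, hb j]
          · intro j hj; exact Function.update_of_ne (by rintro rfl; exact hi hj) _ _
          · rw [Function.update_self]
            have : a i - (a i - w i) = w i := by ring
            rw [this]
            have hnn : 0 ≤ ‖S - (w i) • x i‖ := norm_nonneg _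
            have h2 : ‖S + (w i) • x i‖ ^ 2 ≤ ‖S - (w i) • x i‖ ^ 2 :=
              pow_le_pow_left₀ (norm_nonneg _) h 2
            have hw2' : ‖(w i) • x i‖ ^ 2 ≤ ‖x i‖ ^ 2 := by nlinarith [norm_nonneg ((w i) • x i)]
            nlinarith [par]
        · refine ⟨Function.update b i (a i + w i), ?_, ?_, ?_⟩
          · intro j
            rcases eq_or_ne j i with rfl | hj
            · simpa using hw1 j
            · simp [Function.update_of_ne hj, hb j]
          · intro j hj; exact Function.update_of_ne (by rintro rfl; exact hi hj) _ _
          · rw [Function.update_self]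
            have : a i - (a i + w i) = -w i := by ring
            rw [this, neg_smul, ← sub_eq_add_neg]
            have hnn : 0 ≤ ‖S + (w i) • x i‖ := norm_nonneg _
            have h2 : ‖S - (w i) • x i‖ ^ 2 ≤ ‖S + (w i) • x i‖ ^ 2 :=
              pow_le_pow_left₀ (norm_nonneg _) h 2
            have hw2' : ‖(w i) • x i‖ ^ 2 ≤ ‖x i‖ ^ 2 := by nlinarith [norm_nonneg ((w i) • x i)]
            nlinarith [par]
      obtain ⟨b', hb'1, hb'2, hb'3⟩ := key
      refine ⟨b', hb'1, ?_⟩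
      rw [Finset.sum_insert hi, Finset.sum_insert hi]
      have hsum : ∑ j ∈ s, (a j - b' j) • x j = S := by
        rw [hS]; exact Finset.sum_congr rfl fun j hj => by rw [hb'2 j hj]
      rw [hsum, add_comm ((a i - b' i) • x i) S]
      linarith [hb'3]
  obtain ⟨b, hb, hbound⟩ := main Finset.univ
  refine ⟨b, hb, ?_⟩
  have heq : (∑ j, a j • x j) - ∑ j, b j • x j = ∑ j, (a j - b j) • x j := by
    rw [← Finset.sum_sub_distrib]
    exact Finset.sum_congr rfl fun j _ => (sub_smul _ _ _).symm
  rw [heq]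
  have hnn : (0:ℝ) ≤ ∑ j, ‖x j‖ ^ 2 := Finset.sum_nonneg fun j _ => sq_nonneg _
  linarith [hbound]
end

section
/- Let N ≥ 2, let a_p be complex numbers with |a_p| = 1 for each prime 2 ≤ p ≤ N, and let ε > 0. Then liminf_{T→∞} (1/T)·Leb{t ∈ [0,T] : max_{2≤p≤N, p prime} |p^{it} − a_p| < ε} > 0, where Leb denotes Lebesgue measure. -/
set_option maxHeartbeats 1000000

open Filter MeasureTheory Complex

private lemma aux_fact_eval (P : Finset ℕ) (hP : ∀ p ∈ P, Nat.Prime p) (e : ℕ → ℕ) (q : ℕ)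
    (hq : q ∈ P) : (∏ p ∈ P, p ^ e p).factorization q = e q := by
  rw [Nat.factorization_prod fun p hp => pow_ne_zero _ (hP p hp).pos.ne']
  rw [Finset.sum_apply']
  rw [Finset.sum_eq_single q]
  · rw [(hP q hq).factorization_pow, Finsupp.single_eq_same]
  · intro p hp hne
    rw [(hP p hp).factorization_pow, Finsupp.single_eq_of_ne' hne]
  · intro h; exact absurd hq h

private lemma aux_indep (P : Finset ℕ) (hP : ∀ p ∈ P, Nat.Prime p) (m : ℕ → ℤ)
    (h : ∑ p ∈ P, (m p : ℝ) * Real.log p = 0) : ∀ q ∈ P, m q = 0 := by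
  have hlog : ∀ e : ℕ → ℕ, Real.log (∏ p ∈ P, p ^ e p : ℕ) = ∑ p ∈ P, (e p : ℝ) * Real.log p := by
    intro e
    push_cast
    rw [Real.log_prod fun p hp => by
      have := (hP p hp).pos; positivity]
    refine Finset.sum_congr rfl fun p _ => ?_
    rw [Real.log_pow]
  have hpos : ∀ e : ℕ → ℕ, 0 < ∏ p ∈ P, p ^ e p :=
    fun e => Finset.prod_pos fun p hp => pow_pos (hP p hp).pos _
  have key : (∏ p ∈ P, p ^ (m p).toNat) = ∏ p ∈ P, p ^ (-m p).toNat := by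
    have h1 : Real.log (∏ p ∈ P, p ^ (m p).toNat : ℕ)
        = Real.log (∏ p ∈ P, p ^ (-m p).toNat : ℕ) := by
      rw [hlog, hlog]
      have h2 : ∑ p ∈ P, (((m p).toNat : ℝ) * Real.log p)
          - ∑ p ∈ P, (((-m p).toNat : ℝ) * Real.log p) = ∑ p ∈ P, (m p : ℝ) * Real.log p := by
        rw [← Finset.sum_sub_distrib]
        refine Finset.sum_congr rfl fun p _ => ?_
        rw [← sub_mul]
        congr 1
        have h3 : ((m p).toNat : ℤ) - ((-m p).toNat : ℤ) = m p := by omega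
        exact_mod_cast congrArg (Int.cast : ℤ → ℝ) h3
      linarith [h, h2]
    have := Real.log_injOn_pos (Set.mem_Ioi.mpr (by exact_mod_cast hpos fun p => (m p).toNat))
      (Set.mem_Ioi.mpr (by exact_mod_cast hpos fun p => (-m p).toNat)) h1
    exact_mod_cast this
  intro q hq
  have e1 := aux_fact_eval P hP (fun p => (m p).toNat) q hq
  have e2 := aux_fact_eval P hP (fun p => (-m p).toNat) q hq
  rw [key, e2] at e1
  omega

private lemma aux_cesaro (C : ℂ) (l : ℝ) :
    Filter.Tendsto (fun T : ℝ => (∫ t in (0:ℝ)..T, C * Complex.exp (Complex.I * l * t)) / T)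
      Filter.atTop (nhds (if l = 0 then C else 0)) := by
  rcases eq_or_ne l 0 with hl | hl
  · rw [if_pos hl]
    apply Filter.Tendsto.congr' _ tendsto_const_nhds
    filter_upwards [eventually_ne_atTop (0:ℝ)] with T hT
    subst hl
    simp only [Complex.ofReal_zero, mul_zero, zero_mul, Complex.exp_zero, mul_one,
      intervalIntegral.integral_const, sub_zero, Complex.real_smul]
    rw [mul_comm, mul_div_assoc, div_self (Complex.ofReal_ne_zero.mpr hT), mul_one]
  · rw [if_neg hl]
    have hc : Complex.I * (l : ℂ) ≠ 0 := mul_ne_zero Complex.I_ne_zero (Complex.ofReal_ne_zero.mpr hl)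
    have hkey : ∀ T : ℝ, (∫ t in (0:ℝ)..T, C * Complex.exp (Complex.I * l * t))
        = C * ((Complex.exp (Complex.I * l * T) - 1) / (Complex.I * l)) := by
      intro T
      rw [intervalIntegral.integral_const_mul]
      congr 1
      rw [integral_exp_mul_complex hc]
      simp
    have hnorm1 : ∀ T : ℝ, ‖Complex.exp (Complex.I * (l:ℂ) * (T:ℂ))‖ = 1 := by
      intro T
      rw [show Complex.I * (l:ℂ) * (T:ℂ) = ((l * T : ℝ) : ℂ) * Complex.I by push_cast; ring]
      rw [Complex.norm_exp_ofReal_mul_I]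
    apply squeeze_zero_norm' (a := fun T : ℝ => (‖C‖ * 2 / ‖Complex.I * (l:ℂ)‖) * T⁻¹)
    · filter_upwards [eventually_gt_atTop (0:ℝ)] with T hT
      rw [hkey T]
      have hTc : ‖(T:ℂ)‖ = T := by rw [Complex.norm_real, Real.norm_eq_abs, abs_of_pos hT]
      rw [norm_div, norm_mul, norm_div, hTc]
      rw [show (‖C‖ * 2 / ‖Complex.I * (l:ℂ)‖) * T⁻¹ = ‖C‖ * (2 / ‖Complex.I * (l:ℂ)‖) / T by
        field_simp]
      gcongr
      calc ‖Complex.exp (Complex.I * l * T) - 1‖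
          ≤ ‖Complex.exp (Complex.I * (l:ℂ) * (T:ℂ))‖ + ‖(1:ℂ)‖ := norm_sub_le _ _
        _ = 2 := by rw [hnorm1, norm_one]; norm_num
    · have := tendsto_inv_atTop_zero (𝕜 := ℝ)
      simpa using this.const_mul (‖C‖ * 2 / ‖Complex.I * (l:ℂ)‖)

private lemma aux_cos_pow (n : ℕ) (y : ℝ) :
    (((Real.cos (y / 2) ^ 2) ^ n : ℝ) : ℂ)
      = ∑ j ∈ Finset.range (2 * n + 1),
        ((2 * n).choose j : ℂ) / 4 ^ n * Complex.exp (((j : ℂ) - n) * (Complex.I * (y : ℂ))) := by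
  have hcos : Complex.cos ((y : ℂ) / 2)
      = (Complex.exp ((y : ℂ) / 2 * Complex.I) + Complex.exp (-((y : ℂ) / 2) * Complex.I)) / 2 := by
    have h2 := Complex.two_cos ((y : ℂ) / 2)
    linear_combination h2 / 2
  have h4 : ((4 : ℂ)) ^ n = 2 ^ (2 * n) := by rw [pow_mul]; norm_num
  push_cast
  rw [hcos, div_pow, div_pow, ← pow_mul, ← pow_mul, add_pow]
  rw [Finset.sum_div]
  refine Finset.sum_congr rfl fun j hj => ?_
  rw [Finset.mem_range] at hj
  have hj' : j ≤ 2 * n := Nat.lt_succ_iff.mp hj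
  rw [← Complex.exp_nat_mul, ← Complex.exp_nat_mul, ← Complex.exp_add, h4]
  rw [show ((j : ℂ) * ((y:ℂ) / 2 * Complex.I) + ((2 * n - j : ℕ) : ℂ) * (-((y:ℂ) / 2) * Complex.I))
      = ((j : ℂ) - n) * (Complex.I * (y:ℂ)) by
    rw [Nat.cast_sub hj']; push_cast; ring]
  ring

/-- **Weyl's version of the Kronecker approximation theorem.** For unimodular targets
`a_p` at the primes `p ≤ N`, the set of `t` with `|p^{it} - a_p| < ε` for all primes
`p ≤ N` has positive lower density. -/
theorem statement14
    (N : ℕ) (hN : 2 ≤ N) (a : ℕ → ℂ)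
    (ha : ∀ p : ℕ, p.Prime → p ≤ N → ‖a p‖ = 1)
    (ε : ℝ) (hε : 0 < ε) :
    0 < Filter.liminf (fun T : ℝ =>
        (volume {t : ℝ | t ∈ Set.Icc 0 T ∧ ∀ p : ℕ, p.Prime → p ≤ N →
          ‖(p : ℂ) ^ (Complex.I * (t : ℂ)) - a p‖ < ε}).toReal / T)
      atTop := by
  classical
  set δ : ℝ := min ε 1 with hδdef
  have hδ0 : 0 < δ := lt_min hε one_pos
  have hδ1 : δ ≤ 1 := min_le_right _ _
  have hδε : δ ≤ ε := min_le_left _ _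
  set r : ℝ := 1 - δ ^ 2 / 4 with hrdef
  have hr0 : 0 ≤ r := by rw [hrdef]; nlinarith
  have hr1 : r < 1 := by rw [hrdef]; nlinarith
  set P : Finset ℕ := (Finset.range (N + 1)).filter Nat.Prime with hPdef
  have hP : ∀ p ∈ P, Nat.Prime p := fun p hp => (Finset.mem_filter.mp hp).2
  have hPle : ∀ p ∈ P, p ≤ N := fun p hp =>
    Nat.lt_succ_iff.mp (Finset.mem_range.mp (Finset.mem_filter.mp hp).1)
  set k : ℕ := P.card with hkdef
  obtain ⟨n, hn⟩ : ∃ n : ℕ, r ^ n * (2 * (n : ℝ) + 1) ^ k < 1 := by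
    have h1 : Filter.Tendsto (fun n : ℕ => r ^ n * (2 * (n : ℝ) + 1) ^ k) atTop (nhds 0) := by
      apply squeeze_zero' (f := fun n : ℕ => r ^ n * (2 * (n : ℝ) + 1) ^ k)
        (g := fun n : ℕ => 3 ^ k * ((n : ℝ) ^ k * r ^ n))
      · filter_upwards with n
        positivity
      · filter_upwards [eventually_ge_atTop 1] with n hn
        have hn' : (1 : ℝ) ≤ (n : ℝ) := by exact_mod_cast hn
        rw [mul_comm (r ^ n), show (3:ℝ) ^ k * ((n : ℝ) ^ k * r ^ n) = ((3 * (n:ℝ)) ^ k) * r ^ n by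
          rw [mul_pow]; ring]
        apply mul_le_mul_of_nonneg_right _ (by positivity)
        apply pow_le_pow_left₀ (by positivity)
        linarith
      · have := (tendsto_pow_const_mul_const_pow_of_lt_one k hr0 hr1).const_mul ((3:ℝ) ^ k)
        simpa using this
    exact (h1.eventually_lt_const (by norm_num : (0:ℝ) < 1)).exists
  set θ : ℕ → ℝ := fun p => Complex.arg (a p) with hθdef
  set F : ℝ → ℝ := fun t => ∏ p ∈ P, (Real.cos ((t * Real.log p - θ p) / 2) ^ 2) ^ n with hFdef
  have hFcont : Continuous F := by
    apply continuous_finset_prod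
    intro p _
    fun_prop
  have habs : ∀ p ∈ P, ∀ t : ℝ,
      ‖(p : ℂ) ^ (Complex.I * (t : ℂ)) - a p‖ ^ 2
        = 2 - 2 * Real.cos (t * Real.log p - θ p) := by
    intro p hp t
    have hp2 := (hP p hp).two_le
    have hp0 : ((p : ℕ) : ℂ) ≠ 0 := Nat.cast_ne_zero.mpr (by omega)
    have hap : a p = Complex.exp ((θ p : ℂ) * Complex.I) := by
      conv_lhs => rw [← Complex.norm_mul_exp_arg_mul_I (a p)]
      rw [ha p (hP p hp) (hPle p hp), Complex.ofReal_one, one_mul]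
    have hpt : (p : ℂ) ^ (Complex.I * (t : ℂ))
        = Complex.exp (((t * Real.log p : ℝ) : ℂ) * Complex.I) := by
      rw [Complex.cpow_def_of_ne_zero hp0]
      rw [show ((p:ℕ):ℂ) = (((p:ℕ):ℝ):ℂ) by push_cast; rfl]
      rw [← Complex.ofReal_log (Nat.cast_nonneg p)]
      congr 1
      push_cast
      ring
    rw [hpt, hap, Complex.sq_norm]
    simp only [Complex.normSq_apply, Complex.sub_re, Complex.sub_im,
      Complex.exp_ofReal_mul_I_re, Complex.exp_ofReal_mul_I_im]
    rw [Real.cos_sub]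
    have h1 := Real.sin_sq_add_cos_sq (t * Real.log p)
    have h2 := Real.sin_sq_add_cos_sq (θ p)
    nlinarith [h1, h2]
  have hfactor : ∀ p ∈ P, ∀ t : ℝ,
      (Real.cos ((t * Real.log p - θ p) / 2) ^ 2) ^ n
        = (1 - ‖(p : ℂ) ^ (Complex.I * (t : ℂ)) - a p‖ ^ 2 / 4) ^ n := by
    intro p hp t
    rw [Real.cos_sq, habs p hp t]
    congr 1
    rw [show 2 * ((t * Real.log p - θ p) / 2) = t * Real.log p - θ p by ring]
    ring
  have habs_le : ∀ p ∈ P, ∀ t : ℝ,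
      ‖(p : ℂ) ^ (Complex.I * (t : ℂ)) - a p‖ ≤ 2 := by
    intro p hp t
    have hp2 := (hP p hp).two_le
    have hp0 : ((p : ℕ) : ℂ) ≠ 0 := Nat.cast_ne_zero.mpr (by omega)
    calc ‖(p : ℂ) ^ (Complex.I * (t : ℂ)) - a p‖
        ≤ ‖(p : ℂ) ^ (Complex.I * (t : ℂ))‖ + ‖a p‖ :=
          norm_sub_le _ _
      _ ≤ 2 := by
          rw [ha p (hP p hp) (hPle p hp)]
          have hpt : (p : ℂ) ^ (Complex.I * (t : ℂ))
              = Complex.exp (((t * Real.log p : ℝ) : ℂ) * Complex.I) := by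
            rw [Complex.cpow_def_of_ne_zero hp0]
            rw [show ((p:ℕ):ℂ) = (((p:ℕ):ℝ):ℂ) by push_cast; rfl]
            rw [← Complex.ofReal_log (Nat.cast_nonneg p)]
            congr 1
            push_cast
            ring
          rw [hpt, Complex.norm_exp_ofReal_mul_I]
          norm_num
  have hF0 : ∀ t, 0 ≤ F t := fun t => Finset.prod_nonneg fun p _ => by positivity
  have hF1 : ∀ t, F t ≤ 1 := fun t => Finset.prod_le_one
    (fun p _ => by positivity)
    (fun p _ => pow_le_one₀ (by positivity) (Real.cos_sq_le_one _))
  have hFle : ∀ t : ℝ, ∀ p ∈ P, δ ≤ ‖(p : ℂ) ^ (Complex.I * (t : ℂ)) - a p‖ →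
      F t ≤ r ^ n := by
    intro t p hp hge
    calc F t ≤ ∏ q ∈ P, (if q = p then r ^ n else 1) := by
          apply Finset.prod_le_prod (fun q _ => by positivity)
          intro q hq
          by_cases hqp : q = p
          · subst hqp
            rw [if_pos rfl, hfactor q hq t]
            have hd0 := norm_nonneg ((q:ℂ) ^ (Complex.I * (t:ℂ)) - a q)
            have hd2 := habs_le q hq t
            apply pow_le_pow_left₀ (by nlinarith)
            rw [hrdef]
            nlinarith
          · rw [if_neg hqp]
            exact pow_le_one₀ (by positivity) (Real.cos_sq_le_one _)
      _ = r ^ n := by rw [Finset.prod_ite_eq' P p (fun _ => r ^ n), if_pos hp]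
  set R : Finset ℕ := Finset.range (2 * n + 1) with hRdef
  set Λ : ((p : ℕ) → p ∈ P → ℕ) → ℝ :=
    fun J => ∑ p ∈ P.attach, ((J p.1 p.2 : ℝ) - n) * Real.log p.1 with hΛdef
  set Cc : ((p : ℕ) → p ∈ P → ℕ) → ℂ :=
    fun J => ∏ p ∈ P.attach, (((2 * n).choose (J p.1 p.2) : ℂ) / 4 ^ n *
      Complex.exp (-((J p.1 p.2 : ℂ) - n) * (Complex.I * (θ p.1 : ℂ)))) with hCdef
  have hFexp : ∀ t : ℝ, ((F t : ℝ) : ℂ) =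
      ∑ J ∈ P.pi (fun _ => R), Cc J * Complex.exp (Complex.I * (Λ J : ℝ) * t) := by
    intro t
    have step1 : ((F t : ℝ) : ℂ) = ∏ p ∈ P, ∑ j ∈ R, ((2 * n).choose j : ℂ) / 4 ^ n *
        Complex.exp (((j : ℂ) - n) * (Complex.I * ((t * Real.log p - θ p : ℝ) : ℂ))) := by
      rw [hFdef, Complex.ofReal_prod]
      exact Finset.prod_congr rfl fun p _ => aux_cos_pow n _
    rw [step1, Finset.prod_sum]
    refine Finset.sum_congr rfl fun J hJ => ?_
    calc ∏ p ∈ P.attach, (((2 * n).choose (J p.1 p.2) : ℂ) / 4 ^ n *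
          Complex.exp (((J p.1 p.2 : ℂ) - n) * (Complex.I * ((t * Real.log p.1 - θ p.1 : ℝ) : ℂ))))
        = ∏ p ∈ P.attach, ((((2 * n).choose (J p.1 p.2) : ℂ) / 4 ^ n *
            Complex.exp (-((J p.1 p.2 : ℂ) - n) * (Complex.I * (θ p.1 : ℂ)))) *
            Complex.exp (((((J p.1 p.2 : ℝ) - n) * Real.log p.1 : ℝ) : ℂ) * (Complex.I * (t:ℂ)))) := by
          refine Finset.prod_congr rfl fun p _ => ?_
          conv_rhs => rw [mul_assoc, ← Complex.exp_add]
          congr 2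
          push_cast
          ring
      _ = Cc J * Complex.exp (Complex.I * (Λ J : ℝ) * t) := by
          rw [Finset.prod_mul_distrib, ← Complex.exp_sum]
          congr 1
          congr 1
          simp only [hΛdef]
          push_cast
          rw [Finset.mul_sum, Finset.sum_mul]
          exact Finset.sum_congr rfl fun x _ => by ring
  set creal : ℝ := (((2 * n).choose n : ℝ) / 4 ^ n) ^ k with hcrealdef
  have hJ0mem : (fun p (_ : p ∈ P) => n) ∈ P.pi (fun _ => R) :=
    Finset.mem_pi.mpr fun p hp => Finset.mem_range.mpr (by omega)
  have hΛeq : ∀ J ∈ P.pi (fun _ => R), Λ J = 0 → J = fun p _ => n := by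
    intro J hJ hΛ0
    have hm := aux_indep P hP (fun p => if h : p ∈ P then (J p h : ℤ) - n else 0) ?_
    · funext p hp
      have := hm p hp
      rw [dif_pos hp] at this
      omega
    · have heq : ∑ p ∈ P, (((if h : p ∈ P then (J p h : ℤ) - n else 0 : ℤ)) : ℝ) * Real.log p
          = Λ J := by
        simp only [hΛdef]
        rw [← Finset.sum_attach P
          (fun p => (((if h : p ∈ P then (J p h : ℤ) - n else 0 : ℤ)) : ℝ) * Real.log p)]
        refine Finset.sum_congr rfl fun p _ => ?_
        rw [dif_pos p.2]
        push_cast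
        ring
      rw [heq, hΛ0]
  have hΛ0 : Λ (fun p _ => n) = 0 := by
    simp only [hΛdef]
    simp
  have hc0 : Cc (fun p _ => n) = ((creal : ℝ) : ℂ) := by
    simp only [hCdef, hcrealdef]
    simp only [sub_self, neg_zero, zero_mul, Complex.exp_zero, mul_one]
    rw [Finset.prod_const, Finset.card_attach]
    push_cast
    ring
  have hsum : (∑ J ∈ P.pi (fun _ => R), if Λ J = 0 then Cc J else 0) = ((creal : ℝ) : ℂ) := by
    have hcongr : ∀ J ∈ P.pi (fun _ => R),
        (if Λ J = 0 then Cc J else 0) = (if J = (fun p _ => n) then Cc J else 0) := by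
      intro J hJ
      by_cases hcase : J = (fun p _ => n)
      · rw [if_pos hcase, if_pos (by rw [hcase]; exact hΛ0)]
      · rw [if_neg hcase, if_neg (fun h0 => hcase (hΛeq J hJ h0))]
    rw [Finset.sum_congr rfl hcongr, Finset.sum_ite_eq' (P.pi fun _ => R) (fun p _ => n) Cc,
      if_pos hJ0mem, hc0]
  have hB : Filter.Tendsto (fun T : ℝ => (∫ t in (0:ℝ)..T, F t) / T) atTop (nhds creal) := by
    have hintF : ∀ T : ℝ, (∫ t in (0:ℝ)..T, ((F t : ℝ) : ℂ))
        = ∑ J ∈ P.pi (fun _ => R), ∫ t in (0:ℝ)..T, Cc J * Complex.exp (Complex.I * (Λ J : ℝ) * t) := by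
      intro T
      rw [← intervalIntegral.integral_finset_sum]
      · exact intervalIntegral.integral_congr fun t _ => by rw [hFexp t]
      · intro J hJ
        apply Continuous.intervalIntegrable
        fun_prop
    have h2 := tendsto_finset_sum (P.pi fun _ => R) (fun J _ => aux_cesaro (Cc J) (Λ J))
    have h3 : Filter.Tendsto (fun T : ℝ => (∫ t in (0:ℝ)..T, ((F t : ℝ) : ℂ)) / T) atTop
        (nhds ((creal : ℝ) : ℂ)) := by
      rw [← hsum]
      exact h2.congr fun T => by rw [← Finset.sum_div, ← hintF]
    have h4 := (Complex.continuous_re.tendsto _).comp h3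
    simp only [Function.comp_def, Complex.ofReal_re] at h4
    refine h4.congr fun T => ?_
    rw [intervalIntegral.integral_ofReal]
    rw [show ((∫ t in (0:ℝ)..T, F t : ℝ) : ℂ) / (T:ℂ)
        = (((∫ t in (0:ℝ)..T, F t) / T : ℝ) : ℂ) by push_cast; ring]
    rw [Complex.ofReal_re]
  have hchoose : (1:ℝ) / (2 * n + 1) ≤ ((2 * n).choose n : ℝ) / 4 ^ n := by
    rw [div_le_div_iff₀ (by positivity) (by positivity)]
    have hnat : 4 ^ n ≤ (2 * n + 1) * (2 * n).choose n := by
      calc (4:ℕ) ^ n = 2 ^ (2 * n) := by rw [pow_mul]; norm_num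
        _ = ∑ j ∈ Finset.range (2 * n + 1), (2 * n).choose j := (Nat.sum_range_choose (2*n)).symm
        _ ≤ ∑ _j ∈ Finset.range (2 * n + 1), (2 * n).choose n := by
            apply Finset.sum_le_sum
            intro j _
            have hle := Nat.choose_le_middle j (2 * n)
            rwa [show 2 * n / 2 = n by omega] at hle
        _ = (2 * n + 1) * (2 * n).choose n := by
            rw [Finset.sum_const, Finset.card_range, smul_eq_mul]
    calc (1:ℝ) * 4 ^ n = ((4 ^ n : ℕ) : ℝ) := by push_cast; ring
      _ ≤ (((2 * n + 1) * (2 * n).choose n : ℕ) : ℝ) := by exact_mod_cast hnat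
      _ = ((2 * n).choose n : ℝ) * (2 * (n:ℝ) + 1) := by push_cast; ring
  have hpos : 0 < creal - r ^ n := by
    have h5 : r ^ n < ((1:ℝ) / (2 * (n:ℝ) + 1)) ^ k := by
      rw [div_pow, one_pow, lt_div_iff₀ (by positivity)]
      exact hn
    have h6 : ((1:ℝ) / (2 * (n:ℝ) + 1)) ^ k ≤ creal := by
      rw [hcrealdef]
      apply pow_le_pow_left₀ (by positivity)
      exact_mod_cast hchoose
    linarith
  set S : Set ℝ := {t : ℝ | ∀ p : ℕ, p.Prime → p ≤ N →
      ‖(p : ℂ) ^ (Complex.I * (t : ℂ)) - a p‖ < ε} with hSdef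
  have hSmeas : MeasurableSet S := by
    have hSeq : S = ⋂ p : ℕ, {t : ℝ | p.Prime → p ≤ N →
        ‖(p : ℂ) ^ (Complex.I * (t : ℂ)) - a p‖ < ε} := by
      ext t
      simp only [hSdef, Set.mem_setOf_eq, Set.mem_iInter]
    rw [hSeq]
    refine MeasurableSet.iInter fun p => ?_
    by_cases hp : p.Prime
    · by_cases hpN : p ≤ N
      · have hp0 : ((p : ℕ) : ℂ) ≠ 0 := Nat.cast_ne_zero.mpr hp.pos.ne'
        have hcont : Continuous fun t : ℝ =>
            ‖(p : ℂ) ^ (Complex.I * (t : ℂ)) - a p‖ := by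
          apply continuous_norm.comp
          apply Continuous.sub _ continuous_const
          apply Continuous.const_cpow _ (Or.inl hp0)
          fun_prop
        have : {t : ℝ | p.Prime → p ≤ N →
            ‖(p : ℂ) ^ (Complex.I * (t : ℂ)) - a p‖ < ε}
            = {t : ℝ | ‖(p : ℂ) ^ (Complex.I * (t : ℂ)) - a p‖ < ε} := by
          ext t; simp [hp, hpN]
        rw [this]
        exact (isOpen_lt hcont continuous_const).measurableSet
      · have : {t : ℝ | p.Prime → p ≤ N →
            ‖(p : ℂ) ^ (Complex.I * (t : ℂ)) - a p‖ < ε} = Set.univ := by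
          ext t; simp [hpN]
        rw [this]; exact MeasurableSet.univ
    · have : {t : ℝ | p.Prime → p ≤ N →
          ‖(p : ℂ) ^ (Complex.I * (t : ℂ)) - a p‖ < ε} = Set.univ := by
        ext t; simp [hp]
      rw [this]; exact MeasurableSet.univ
  have hptwise : ∀ t : ℝ, F t ≤ S.indicator (fun _ => (1:ℝ)) t + r ^ n := by
    intro t
    have hrn : 0 ≤ r ^ n := by positivity
    by_cases ht : t ∈ S
    · rw [Set.indicator_of_mem ht]
      linarith [hF1 t]
    · rw [Set.indicator_of_notMem ht]
      rw [hSdef, Set.mem_setOf_eq] at ht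
      push_neg at ht
      obtain ⟨p, hp, hpN, hlt⟩ := ht
      have hpP : p ∈ P := Finset.mem_filter.mpr ⟨Finset.mem_range.mpr (by omega), hp⟩
      have := hFle t p hpP (le_trans hδε hlt)
      linarith
  have hmain : ∀ᶠ T : ℝ in atTop,
      (∫ t in (0:ℝ)..T, F t) / T - r ^ n ≤
      (volume {t : ℝ | t ∈ Set.Icc 0 T ∧ ∀ p : ℕ, p.Prime → p ≤ N →
          ‖(p : ℂ) ^ (Complex.I * (t : ℂ)) - a p‖ < ε}).toReal / T := by
    filter_upwards [eventually_gt_atTop (0:ℝ)] with T hT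
    have hseteq : {t : ℝ | t ∈ Set.Icc 0 T ∧ ∀ p : ℕ, p.Prime → p ≤ N →
        ‖(p : ℂ) ^ (Complex.I * (t : ℂ)) - a p‖ < ε} = Set.Icc 0 T ∩ S := rfl
    rw [hseteq]
    have hind1 : IntervalIntegrable (fun t => S.indicator (fun _ => (1:ℝ)) t) volume 0 T := by
      rw [intervalIntegrable_iff]
      have hfin : volume (Set.uIoc (0:ℝ) T) < ⊤ := by
        rw [Set.uIoc_of_le hT.le]
        exact measure_Ioc_lt_top
      exact (MeasureTheory.integrableOn_const hfin.ne).indicator hSmeas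
    have hind2 : IntervalIntegrable (fun _ : ℝ => r ^ n) volume 0 T :=
      intervalIntegrable_const
    have hFileq : (∫ t in (0:ℝ)..T, F t)
        ≤ ∫ t in (0:ℝ)..T, (S.indicator (fun _ => (1:ℝ)) t + r ^ n) :=
      intervalIntegral.integral_mono_on hT.le (hFcont.intervalIntegrable 0 T)
        (hind1.add hind2) (fun x _ => hptwise x)
    have hsplit : (∫ t in (0:ℝ)..T, (S.indicator (fun _ => (1:ℝ)) t + r ^ n))
        = (volume (S ∩ Set.Ioc 0 T)).toReal + r ^ n * T := by
      rw [intervalIntegral.integral_add hind1 hind2]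
      congr 1
      · rw [intervalIntegral.integral_of_le hT.le]
        rw [MeasureTheory.setIntegral_indicator hSmeas]
        rw [MeasureTheory.setIntegral_const, smul_eq_mul, mul_one, Set.inter_comm]
        rfl
      · rw [intervalIntegral.integral_const, smul_eq_mul, sub_zero, mul_comm]
    have hmono : (volume (S ∩ Set.Ioc 0 T)).toReal ≤ (volume (Set.Icc 0 T ∩ S)).toReal := by
      apply ENNReal.toReal_mono
      · exact ne_top_of_le_ne_top measure_Icc_lt_top.ne (measure_mono Set.inter_subset_left)
      · apply measure_mono
        intro x hx
        exact ⟨Set.Ioc_subset_Icc_self hx.2, hx.1⟩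
    have hcomb : (∫ t in (0:ℝ)..T, F t) ≤ (volume (Set.Icc 0 T ∩ S)).toReal + r ^ n * T := by
      linarith
    have h7 : (∫ t in (0:ℝ)..T, F t) / T
        ≤ ((volume (Set.Icc 0 T ∩ S)).toReal + r ^ n * T) / T := by
      gcongr
    rw [add_div, mul_div_assoc, div_self hT.ne', mul_one] at h7
    linarith
  have hBtend : Filter.Tendsto (fun T : ℝ => (∫ t in (0:ℝ)..T, F t) / T - r ^ n) atTop
      (nhds (creal - r ^ n)) := hB.sub_const (r ^ n)
  calc (0:ℝ) < creal - r ^ n := hpos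
    _ = Filter.liminf (fun T : ℝ => (∫ t in (0:ℝ)..T, F t) / T - r ^ n) atTop :=
        hBtend.liminf_eq.symm
    _ ≤ _ := by
        have hub : ∀ᶠ T : ℝ in atTop,
            (volume {t : ℝ | t ∈ Set.Icc 0 T ∧ ∀ p : ℕ, p.Prime → p ≤ N →
              ‖(p : ℂ) ^ (Complex.I * (t : ℂ)) - a p‖ < ε}).toReal / T ≤ 1 := by
          filter_upwards [eventually_ge_atTop (1:ℝ)] with T hT
          have h1 : volume {t : ℝ | t ∈ Set.Icc 0 T ∧ ∀ p : ℕ, p.Prime → p ≤ N →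
              ‖(p : ℂ) ^ (Complex.I * (t : ℂ)) - a p‖ < ε}
              ≤ volume (Set.Icc (0:ℝ) T) := measure_mono fun x hx => hx.1
          have h2 : (volume (Set.Icc (0:ℝ) T)).toReal = T := by
            rw [Real.volume_Icc, ENNReal.toReal_ofReal (by linarith)]
            ring
          rw [div_le_one (by linarith)]
          calc (volume {t : ℝ | t ∈ Set.Icc 0 T ∧ ∀ p : ℕ, p.Prime → p ≤ N →
                ‖(p : ℂ) ^ (Complex.I * (t : ℂ)) - a p‖ < ε}).toReal
              ≤ (volume (Set.Icc (0:ℝ) T)).toReal :=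
                ENNReal.toReal_mono measure_Icc_lt_top.ne h1
            _ = T := h2
        exact Filter.liminf_le_liminf hmain hBtend.isBoundedUnder_ge
          (isCoboundedUnder_ge_of_eventually_le atTop hub)
end
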